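/- Let p ∈ (1, ∞), let n ≥ 1 be an integer, and let σ_n : ℝ^n → ℝ^n be given by σ_n(x) = |x|^{p−2} x (with σ_n(0) = 0). There exists a constant C > 0, depending only on p, such that for all x, z ∈ ℝ^n: |σ_n(x) − σ_n(z)| ≤ C (|x| + |x − z|)^{p−2} |x − z|, where the right-hand side is interpreted as 0 when x = z. (In the notation of the shifted N-functions, the right-hand side equals C φ_{|x|}'(|x − z|).) -/

import Mathlib

/-- The power flux function `σₙ(x) = |x|^{p-2} x` (with `σₙ(0) = 0`). -/
noncomputable def sigmaFlux (p : ℝ) {n : ℕ} (x : EuclideanSpace ℝ (Fin n)) :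
    EuclideanSpace ℝ (Fin n) :=
  ‖x‖ ^ (p - 2) • x

private lemma rpow_three_bound {p t u : ℝ} (hp1 : 1 < p) (ht : 0 < t) (htu : t ≤ u)
    (hu3 : u ≤ 3 * t) : t ^ (p - 2) ≤ 3 * u ^ (p - 2) := by
  rcases le_or_gt 2 p with h2 | h2
  · have h := Real.rpow_le_rpow (z := p - 2) ht.le htu (by linarith)
    have h0 := Real.rpow_nonneg (le_trans ht.le htu) (p - 2)
    linarith
  · have hu : 0 < u := lt_of_lt_of_le ht htu
    have h1 : (3 * t) ^ (p - 2) ≤ u ^ (p - 2) :=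
      Real.rpow_le_rpow_of_nonpos hu hu3 (by linarith)
    have h2' : (3 * t) ^ (p - 2) = 3 ^ (p - 2) * t ^ (p - 2) :=
      Real.mul_rpow (by norm_num) ht.le
    have h3 : (3 : ℝ) ^ (-1 : ℝ) ≤ 3 ^ (p - 2) :=
      Real.rpow_le_rpow_of_exponent_le (by norm_num) (by linarith)
    have h4 : (3 : ℝ) ^ (-1 : ℝ) = 1 / 3 := by
      rw [Real.rpow_neg_one]; norm_num
    have h5 : 0 ≤ t ^ (p - 2) := Real.rpow_nonneg ht.le _
    rw [h4] at h3
    nlinarith [mul_nonneg (by linarith : (0:ℝ) ≤ 3 ^ (p - 2) - 1 / 3) h5]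

private lemma norm_sigmaFlux {p : ℝ} (hp1 : 1 < p) {n : ℕ} (y : EuclideanSpace ℝ (Fin n)) :
    ‖sigmaFlux p y‖ = ‖y‖ ^ (p - 1) := by
  unfold sigmaFlux
  rw [norm_smul, Real.norm_eq_abs, abs_of_nonneg (Real.rpow_nonneg (norm_nonneg y) _)]
  rcases eq_or_ne (‖y‖) 0 with h | h
  · rw [h, mul_zero, Real.zero_rpow (by intro hc; linarith [hc] : p - 1 ≠ 0)]
  · rw [← Real.rpow_add_one h]
    congr 1
    ring

private lemma sq_rpow_helper (t : ℝ) (ht : 0 ≤ t) (r : ℝ) :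
    ((t ^ 2 : ℝ)) ^ r = t ^ (2 * r) := by
  rw [← Real.rpow_natCast t 2, ← Real.rpow_mul ht]
  norm_num

private lemma sigmaFlux_eq (p : ℝ) {n : ℕ} :
    (sigmaFlux p (n := n)) = fun y => ((‖y‖ ^ 2 : ℝ) ^ ((p - 2) / 2)) • y := by
  funext y
  unfold sigmaFlux
  congr 1
  rw [sq_rpow_helper _ (norm_nonneg y)]
  congr 1
  ring

set_option maxHeartbeats 1000000 in
private lemma sigmaFlux_hasFDerivAt (p : ℝ) {n : ℕ} (y : EuclideanSpace ℝ (Fin n))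
    (hy : y ≠ 0) :
    ∃ D : EuclideanSpace ℝ (Fin n) →L[ℝ] EuclideanSpace ℝ (Fin n),
      HasFDerivAt (sigmaFlux p) D y ∧ ‖D‖ ≤ (1 + |p - 2|) * ‖y‖ ^ (p - 2) := by
  have hny : ‖y‖ ≠ 0 := norm_ne_zero_iff.mpr hy
  have hnpos : (0 : ℝ) < ‖y‖ := norm_pos_iff.mpr hy
  have hsq : (‖y‖ ^ 2 : ℝ) ≠ 0 := pow_ne_zero _ hny
  have h1 : HasFDerivAt (fun w : EuclideanSpace ℝ (Fin n) => (‖w‖ ^ 2 : ℝ))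
      (2 • innerSL ℝ y) y := (hasStrictFDerivAt_norm_sq y).hasFDerivAt
  have h2 := h1.rpow_const (p := (p - 2) / 2) (Or.inl hsq)
  have h3 := h2.smul (hasFDerivAt_id y)
  have h3' : HasFDerivAt (sigmaFlux p)
      (((‖y‖ ^ 2 : ℝ) ^ ((p - 2) / 2)) • ContinuousLinearMap.id ℝ (EuclideanSpace ℝ (Fin n)) +
        (((p - 2) / 2 * (‖y‖ ^ 2 : ℝ) ^ ((p - 2) / 2 - 1)) • (2 • innerSL ℝ y)).smulRight y)
      y := by
    rw [sigmaFlux_eq p]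
    exact h3
  refine ⟨_, h3', ?_⟩
  -- rewrite the scalar coefficients
  have e1 : ((‖y‖ ^ 2 : ℝ)) ^ ((p - 2) / 2) = ‖y‖ ^ (p - 2) := by
    rw [sq_rpow_helper _ (norm_nonneg y)]; congr 1; ring
  have e2 : ((‖y‖ ^ 2 : ℝ)) ^ ((p - 2) / 2 - 1) = ‖y‖ ^ (p - 4) := by
    rw [sq_rpow_helper _ (norm_nonneg y)]; congr 1; ring
  have hA : ‖((‖y‖ ^ 2 : ℝ) ^ ((p - 2) / 2)) •
      ContinuousLinearMap.id ℝ (EuclideanSpace ℝ (Fin n))‖ ≤ ‖y‖ ^ (p - 2) := by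
    calc ‖((‖y‖ ^ 2 : ℝ) ^ ((p - 2) / 2)) •
        ContinuousLinearMap.id ℝ (EuclideanSpace ℝ (Fin n))‖
        ≤ ‖((‖y‖ ^ 2 : ℝ) ^ ((p - 2) / 2) : ℝ)‖ *
            ‖ContinuousLinearMap.id ℝ (EuclideanSpace ℝ (Fin n))‖ :=
            ContinuousLinearMap.opNorm_smul_le _ _
      _ = ‖y‖ ^ (p - 2) * ‖ContinuousLinearMap.id ℝ (EuclideanSpace ℝ (Fin n))‖ := by
          rw [Real.norm_eq_abs, e1, abs_of_nonneg (Real.rpow_nonneg (norm_nonneg y) _)]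
      _ ≤ ‖y‖ ^ (p - 2) * 1 :=
          mul_le_mul_of_nonneg_left ContinuousLinearMap.norm_id_le
            (Real.rpow_nonneg (norm_nonneg y) _)
      _ = ‖y‖ ^ (p - 2) := mul_one _
  have hT : ‖(2 • innerSL ℝ y : EuclideanSpace ℝ (Fin n) →L[ℝ] ℝ)‖ ≤ 2 * ‖y‖ := by
    rw [two_smul]
    calc ‖innerSL ℝ y + innerSL ℝ y‖ ≤ ‖innerSL ℝ y‖ + ‖innerSL ℝ y‖ := norm_add_le _ _
      _ = 2 * ‖y‖ := by rw [innerSL_apply_norm]; ring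
  have hsplit : ‖y‖ ^ (p - 4) * ‖y‖ * ‖y‖ = ‖y‖ ^ (p - 2) := by
    have : ‖y‖ ^ (p - 4) * ‖y‖ * ‖y‖ = ‖y‖ ^ (p - 4) * ‖y‖ ^ (1 : ℝ) * ‖y‖ ^ (1 : ℝ) := by
      rw [Real.rpow_one]
    rw [this, ← Real.rpow_add hnpos, ← Real.rpow_add hnpos]
    congr 1
    ring
  have hB : ‖(((p - 2) / 2 * (‖y‖ ^ 2 : ℝ) ^ ((p - 2) / 2 - 1)) •
      (2 • innerSL ℝ y)).smulRight y‖ ≤ |p - 2| * ‖y‖ ^ (p - 2) := by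
    rw [ContinuousLinearMap.norm_smulRight_apply]
    have h6 : 0 ≤ |(p - 2) / 2| * ‖y‖ ^ (p - 4) := by positivity
    calc ‖((p - 2) / 2 * (‖y‖ ^ 2 : ℝ) ^ ((p - 2) / 2 - 1)) • (2 • innerSL ℝ y)‖ * ‖y‖
        ≤ ‖((p - 2) / 2 * (‖y‖ ^ 2 : ℝ) ^ ((p - 2) / 2 - 1) : ℝ)‖ *
            ‖(2 • innerSL ℝ y : EuclideanSpace ℝ (Fin n) →L[ℝ] ℝ)‖ * ‖y‖ :=
          mul_le_mul_of_nonneg_right (ContinuousLinearMap.opNorm_smul_le _ _) (norm_nonneg y)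
      _ = |(p - 2) / 2| * ‖y‖ ^ (p - 4) * ‖(2 • innerSL ℝ y : EuclideanSpace ℝ (Fin n) →L[ℝ] ℝ)‖
            * ‖y‖ := by
          rw [Real.norm_eq_abs, e2, abs_mul,
            abs_of_nonneg (Real.rpow_nonneg (norm_nonneg y) _)]
      _ ≤ |(p - 2) / 2| * ‖y‖ ^ (p - 4) * (2 * ‖y‖) * ‖y‖ := by
          apply mul_le_mul_of_nonneg_right _ (norm_nonneg y)
          exact mul_le_mul_of_nonneg_left hT h6
      _ = |p - 2| * (‖y‖ ^ (p - 4) * ‖y‖ * ‖y‖) := by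
          rw [abs_div]
          simp only [abs_two]
          field_simp
      _ = |p - 2| * ‖y‖ ^ (p - 2) := by rw [hsplit]
  calc ‖_ + _‖ ≤ _ + _ := norm_add_le _ _
    _ ≤ ‖y‖ ^ (p - 2) + |p - 2| * ‖y‖ ^ (p - 2) := add_le_add hA hB
    _ = (1 + |p - 2|) * ‖y‖ ^ (p - 2) := by ring

/-- `|σₙ(x) - σₙ(z)| ≤ C (|x| + |x-z|)^{p-2} |x-z| = C φ_{|x|}'(|x-z|)`. -/
theorem power_flux_continuity_phi (p : ℝ) (hp1 : 1 < p) (n : ℕ) (hn : 1 ≤ n) :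
    ∃ C : ℝ, 0 < C ∧
      ∀ x z : EuclideanSpace ℝ (Fin n),
        ‖sigmaFlux p x - sigmaFlux p z‖ ≤
          C * ((‖x‖ + ‖x - z‖) ^ (p - 2) * ‖x - z‖) := by
  have hC2 : (0 : ℝ) < 2 ^ (p - 1) := Real.rpow_pos_of_pos (by norm_num) _
  have hC3 : (0 : ℝ) < 3 ^ (p - 1) := Real.rpow_pos_of_pos (by norm_num) _
  refine ⟨3 * (2 ^ (p - 1) + 3 ^ (p - 1)) + 3 * (1 + |p - 2|), by positivity, ?_⟩
  intro x z
  rcases eq_or_ne x z with rfl | hxz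
  · simp
  have hd : (0 : ℝ) < ‖x - z‖ := norm_pos_iff.mpr (sub_ne_zero.mpr hxz)
  have hb : ‖z‖ ≤ ‖x‖ + ‖x - z‖ := norm_le_norm_add_norm_sub x z
  have hRf : (0 : ℝ) ≤ (‖x‖ + ‖x - z‖) ^ (p - 2) :=
    Real.rpow_nonneg (by positivity) _
  rcases le_or_gt ‖x‖ (2 * ‖x - z‖) with hcase | hcase
  · -- far case: d ≥ a/2
    have h1 : ‖sigmaFlux p x - sigmaFlux p z‖ ≤ ‖x‖ ^ (p - 1) + ‖z‖ ^ (p - 1) := by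
      calc ‖sigmaFlux p x - sigmaFlux p z‖ ≤ ‖sigmaFlux p x‖ + ‖sigmaFlux p z‖ :=
            norm_sub_le _ _
        _ = ‖x‖ ^ (p - 1) + ‖z‖ ^ (p - 1) := by
            rw [norm_sigmaFlux hp1, norm_sigmaFlux hp1]
    have h2 : ‖x‖ ^ (p - 1) ≤ 2 ^ (p - 1) * ‖x - z‖ ^ (p - 1) := by
      calc ‖x‖ ^ (p - 1) ≤ (2 * ‖x - z‖) ^ (p - 1) :=
            Real.rpow_le_rpow (norm_nonneg x) hcase (by linarith)
        _ = 2 ^ (p - 1) * ‖x - z‖ ^ (p - 1) := Real.mul_rpow (by norm_num) hd.le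
    have h3 : ‖z‖ ^ (p - 1) ≤ 3 ^ (p - 1) * ‖x - z‖ ^ (p - 1) := by
      calc ‖z‖ ^ (p - 1) ≤ (3 * ‖x - z‖) ^ (p - 1) :=
            Real.rpow_le_rpow (norm_nonneg z) (by linarith) (by linarith)
        _ = 3 ^ (p - 1) * ‖x - z‖ ^ (p - 1) := Real.mul_rpow (by norm_num) hd.le
    have h4 : ‖x - z‖ ^ (p - 1) = ‖x - z‖ ^ (p - 2) * ‖x - z‖ := by
      rw [← Real.rpow_add_one hd.ne']
      congr 1
      ring
    have h5 : ‖x - z‖ ^ (p - 2) ≤ 3 * (‖x‖ + ‖x - z‖) ^ (p - 2) :=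
      rpow_three_bound hp1 hd (by linarith [norm_nonneg x]) (by linarith)
    have habs : (0 : ℝ) ≤ 1 + |p - 2| := by positivity
    nlinarith [hd.le, hRf, mul_le_mul_of_nonneg_right h5 hd.le,
      mul_nonneg (mul_nonneg habs hRf) hd.le]
  · -- near case: mean value theorem on the segment
    have ha : (0 : ℝ) < ‖x‖ := by linarith
    have hseg : ∀ y ∈ segment ℝ z x, ‖x‖ - ‖x - z‖ ≤ ‖y‖ ∧ ‖y‖ ≤ ‖x‖ + ‖x - z‖ := by
      rintro y ⟨s, t, hs, ht, hst, rfl⟩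
      have hyx : s • z + t • x - x = s • (z - x) := by
        have hts : t = 1 - s := by linarith
        rw [hts]
        module
      have h' : ‖s • z + t • x - x‖ ≤ ‖x - z‖ := by
        rw [hyx, norm_smul, Real.norm_eq_abs, abs_of_nonneg hs, norm_sub_rev]
        calc s * ‖x - z‖ ≤ 1 * ‖x - z‖ :=
              mul_le_mul_of_nonneg_right (by linarith) (norm_nonneg _)
          _ = ‖x - z‖ := one_mul _
      constructor
      · have h1 := norm_sub_norm_le x (s • z + t • x)
        rw [norm_sub_rev] at h1
        linarith
      · have h1 := norm_le_norm_add_norm_sub' (s • z + t • x) x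
        linarith
    have hM : ∀ y ∈ segment ℝ z x,
        HasFDerivWithinAt (sigmaFlux p) (fderiv ℝ (sigmaFlux p) y) (segment ℝ z x) y ∧
          ‖fderiv ℝ (sigmaFlux p) y‖ ≤
            (1 + |p - 2|) * (3 * ((‖x‖ + ‖x - z‖) ^ (p - 2))) := by
      intro y hy
      obtain ⟨hlow, hupp⟩ := hseg y hy
      have hy0 : y ≠ 0 := by
        intro h
        rw [h, norm_zero] at hlow
        linarith
      have hypos : (0 : ℝ) < ‖y‖ := by linarith
      obtain ⟨D, hD, hDn⟩ := sigmaFlux_hasFDerivAt p y hy0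
      rw [hD.fderiv]
      refine ⟨hD.hasFDerivWithinAt, hDn.trans ?_⟩
      have hb3 : ‖y‖ ^ (p - 2) ≤ 3 * (‖x‖ + ‖x - z‖) ^ (p - 2) :=
        rpow_three_bound hp1 hypos hupp (by linarith)
      exact mul_le_mul_of_nonneg_left hb3 (by positivity)
    have hmvt := (convex_segment z x).norm_image_sub_le_of_norm_hasFDerivWithin_le
      (fun y hy => (hM y hy).1) (fun y hy => (hM y hy).2)
      (left_mem_segment ℝ z x) (right_mem_segment ℝ z x)
    have hpos2 : (0 : ℝ) ≤ (2 ^ (p - 1) + 3 ^ (p - 1)) * ((‖x‖ + ‖x - z‖) ^ (p - 2) * ‖x - z‖) := by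
      have := mul_nonneg hRf hd.le
      positivity
    calc ‖sigmaFlux p x - sigmaFlux p z‖
        ≤ (1 + |p - 2|) * (3 * ((‖x‖ + ‖x - z‖) ^ (p - 2))) * ‖x - z‖ := hmvt
      _ ≤ (3 * (2 ^ (p - 1) + 3 ^ (p - 1)) + 3 * (1 + |p - 2|)) *
            ((‖x‖ + ‖x - z‖) ^ (p - 2) * ‖x - z‖) := by nlinarith [hRf, hd.le]
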